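/- arXiv:2006.02988 — 3 statements merged into one kernel-verified Lean document; each statement's English description precedes it below -/
import Mathlib

section
/- Let G be a simple connected graph and H = H(G) its auxiliary graph (vertices of H are the edges of G; two edges e1, e2 of G are adjacent in H if some pair of vertices of G is separated by both e1 and e2). If an edge coloring f strongly rainbow connects G, then f is a proper coloring of the vertices of H. Consequently src(G) ≥ χ(H) ≥ ω(H). -/
open SimpleGraph

variable {V : Type*} {C : Type*}

/-- A walk is a shortest path: it is a path whose length equals the distance
between its endpoints. -/
def IsShortestPath (G : SimpleGraph V) {u v : V} (p : G.Walk u v) : Prop :=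
  p.IsPath ∧ p.length = G.dist u v

/-- A walk is rainbow w.r.t. an edge coloring `f` if all of its edges receive
pairwise distinct colors. -/
def IsRainbow {G : SimpleGraph V} (f : Sym2 V → C) {u v : V} (p : G.Walk u v) : Prop :=
  (p.edges.map f).Nodup

/-- An edge `e` separates the vertices `u` and `v` if `e` lies on every
shortest `(u,v)`-path. -/
def EdgeSeparates (G : SimpleGraph V) (e : Sym2 V) (u v : V) : Prop :=
  ∀ p : G.Walk u v, IsShortestPath G p → e ∈ p.edges

/-- A vertex `w` separates the vertices `u` and `v` if `w` is an internal
vertex of every shortest `(u,v)`-path. -/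
def VertexSeparates (G : SimpleGraph V) (w u v : V) : Prop :=
  w ≠ u ∧ w ≠ v ∧ ∀ p : G.Walk u v, IsShortestPath G p → w ∈ p.support

/-- The auxiliary graph `H(G)`: vertices are the edges of `G`, and two edges
are adjacent iff some pair of distinct vertices of `G` is separated by both. -/
def auxGraph (G : SimpleGraph V) : SimpleGraph G.edgeSet where
  Adj e₁ e₂ := e₁ ≠ e₂ ∧
    ∃ u v : V, u ≠ v ∧ EdgeSeparates G e₁.1 u v ∧ EdgeSeparates G e₂.1 u v
  symm := ⟨by
    rintro e₁ e₂ ⟨hne, u, v, huv, h1, h2⟩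
    exact ⟨hne.symm, u, v, huv, h2, h1⟩⟩
  loopless := ⟨by rintro e ⟨hne, -⟩; exact hne rfl⟩

/-- An edge coloring strongly rainbow connects `G` if every pair of distinct
vertices is joined by a rainbow shortest path. -/
def StronglyRainbowConnects (G : SimpleGraph V) (f : Sym2 V → C) : Prop :=
  ∀ u v : V, u ≠ v → ∃ p : G.Walk u v, IsShortestPath G p ∧ IsRainbow f p

/-- An edge coloring rainbow connects `G` if every pair of distinct vertices
is joined by a rainbow path. -/
def RainbowConnects (G : SimpleGraph V) (f : Sym2 V → C) : Prop :=
  ∀ u v : V, u ≠ v → ∃ p : G.Walk u v, p.IsPath ∧ IsRainbow f p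

/-- The strong rainbow connection number of `G`. -/
noncomputable def src (G : SimpleGraph V) : ℕ :=
  sInf {k : ℕ | ∃ f : Sym2 V → Fin k, StronglyRainbowConnects G f}

/-- The rainbow connection number of `G`. -/
noncomputable def rc (G : SimpleGraph V) : ℕ :=
  sInf {k : ℕ | ∃ f : Sym2 V → Fin k, RainbowConnects G f}

theorem srcProper {V C : Type*} (G : SimpleGraph V)
    (f : Sym2 V → C) (hf : StronglyRainbowConnects G f) :
    ∀ e₁ e₂ : G.edgeSet, (auxGraph G).Adj e₁ e₂ → f e₁.1 ≠ f e₂.1 := by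
  rintro e₁ e₂ ⟨hne, u, v, huv, h1, h2⟩ heq
  obtain ⟨p, hsp, hr⟩ := hf u v huv
  exact hne (Subtype.ext (List.inj_on_of_nodup_map hr (h1 p hsp) (h2 p hsp) heq))

/-- If `f` strongly rainbow connects `G`, then `f` is a proper coloring of the
vertices of the auxiliary graph `H(G)`; consequently `src(G) ≥ χ(H) ≥ ω(H)`. -/
theorem stmt2 {V C : Type*} [Fintype V] (G : SimpleGraph V) (hG : G.Connected)
    (f : Sym2 V → C) (hf : StronglyRainbowConnects G f) :
    (∀ e₁ e₂ : G.edgeSet, (auxGraph G).Adj e₁ e₂ → f e₁.1 ≠ f e₂.1) ∧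
    ((auxGraph G).cliqueNum : ℕ∞) ≤ (auxGraph G).chromaticNumber ∧
    (auxGraph G).chromaticNumber ≤ (src G : ℕ∞) := by
  classical
  refine ⟨srcProper G f hf, ?_, ?_⟩
  · haveI : Fintype G.edgeSet := Fintype.ofFinite _
    obtain ⟨s, hs⟩ := (auxGraph G).exists_isNClique_cliqueNum
    calc ((auxGraph G).cliqueNum : ℕ∞) = (s.card : ℕ∞) := by rw [hs.2]
      _ ≤ _ := hs.1.card_le_chromaticNumber
  · -- the set defining src is nonempty
    have hne : {k : ℕ | ∃ g : Sym2 V → Fin k, StronglyRainbowConnects G g}.Nonempty := by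
      haveI : Fintype (Sym2 V) := Fintype.ofFinite _
      refine ⟨Fintype.card (Sym2 V), ⇑(Fintype.equivFin (Sym2 V)), fun u v huv => ?_⟩
      obtain ⟨p, hp, hl⟩ := hG.exists_path_of_dist u v
      exact ⟨p, ⟨hp, hl⟩, (hp.edges_nodup.map (Fintype.equivFin (Sym2 V)).injective)⟩
    obtain ⟨g, hg⟩ := Nat.sInf_mem hne
    have : (auxGraph G).Colorable (src G) :=
      ⟨SimpleGraph.Coloring.mk (fun e => g e.1) (fun hadj => srcProper G g hg _ _ hadj)⟩
    exact this.chromaticNumber_le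
end

section
/- Let G be the graph obtained as the union of k+1 copies of K_4 where consecutive copies share an edge (vertices of the i-th K_4 are v_{2(i-1)+1},...,v_{2(i-1)+4}, so copies i and i+1 share two vertices and the edge between them). Then diam(G) = k+1 and no pair of vertices of G is separated by any edge, so the auxiliary graph H(G) has no edges and ω(H(G)) = 1; hence diam(G) − ω(H(G)) = k. -/
open SimpleGraph

variable {V : Type*} {C : Type*}

/-- The chain of `k+1` copies of `K₄`, where the `i`-th copy (`0 ≤ i ≤ k`) is
induced on the vertices `2i, 2i+1, 2i+2, 2i+3`, so that consecutive copies
share an edge. -/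
def chainK4 (k : ℕ) : SimpleGraph (Fin (2 * k + 4)) where
  Adj a b := a ≠ b ∧ ∃ i : ℕ, i ≤ k ∧ 2 * i ≤ a.val ∧ a.val ≤ 2 * i + 3 ∧
      2 * i ≤ b.val ∧ b.val ≤ 2 * i + 3
  symm := ⟨by
    rintro a b ⟨h, i, hi, h1, h2, h3, h4⟩
    exact ⟨h.symm, i, hi, h3, h4, h1, h2⟩⟩
  loopless := ⟨by rintro a ⟨h, -⟩; exact h rfl⟩

namespace ChainHelp

variable {k : ℕ}

lemma adj_iff {u v : Fin (2 * k + 4)} :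
    (chainK4 k).Adj u v ↔ u ≠ v ∧ u.val / 2 ≤ v.val / 2 + 1 ∧ v.val / 2 ≤ u.val / 2 + 1 := by
  constructor
  · rintro ⟨h, i, hi, h1, h2, h3, h4⟩
    exact ⟨h, by omega, by omega⟩
  · rintro ⟨h, h1, h2⟩
    have hu := u.isLt
    have hv := v.isLt
    exact ⟨h, min (min (u.val / 2) (v.val / 2)) k, by omega, by omega, by omega, by omega, by omega⟩

lemma walk_lower {u v : Fin (2 * k + 4)} (p : (chainK4 k).Walk u v) :
    v.val / 2 ≤ u.val / 2 + p.length ∧ u.val / 2 ≤ v.val / 2 + p.length := by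
  induction p with
  | nil => simp
  | cons h p ih =>
    rw [SimpleGraph.Walk.length_cons]
    obtain ⟨-, i, -, h1, h2, h3, h4⟩ := h
    omega

/-- the successor vertex in block `u/2 + 1` with parity `t`. -/
def nxt (t : ℕ) (u : Fin (2 * k + 4)) (hk : u.val / 2 + 2 ≤ k + 1) : Fin (2 * k + 4) :=
  ⟨2 * (u.val / 2) + 2 + t % 2, by omega⟩

lemma nxt_val (t : ℕ) (u : Fin (2 * k + 4)) (hk : u.val / 2 + 2 ≤ k + 1) :
    (nxt t u hk).val = 2 * (u.val / 2) + 2 + t % 2 := rfl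

lemma adj_nxt (t : ℕ) (u : Fin (2 * k + 4)) (hk : u.val / 2 + 2 ≤ k + 1) :
    (chainK4 k).Adj u (nxt t u hk) := by
  have hval := nxt_val t u hk
  rw [adj_iff]
  exact ⟨Fin.ne_of_val_ne (by omega), by omega, by omega⟩

lemma hk_of {u v : Fin (2 * k + 4)} {d : ℕ} (h : u.val / 2 + (d + 2) = v.val / 2) :
    u.val / 2 + 2 ≤ k + 1 := by
  have := v.isLt; omega

lemma nxt_hyp {u v : Fin (2 * k + 4)} {d : ℕ} (h : u.val / 2 + (d + 2) = v.val / 2) :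
    (nxt t u (hk_of h)).val / 2 + (d + 1) = v.val / 2 := by
  rw [nxt_val]; omega

/-- the walk from `u` to `v` through intermediate vertices of parity `t`. -/
def mkW (t : ℕ) : (d : ℕ) → (u v : Fin (2 * k + 4)) →
    u.val / 2 + d = v.val / 2 → 1 ≤ d → (chainK4 k).Walk u v
  | 0, _, _, _, hd => absurd hd (by omega)
  | 1, u, v, h, _ =>
      SimpleGraph.Walk.cons
        (adj_iff.mpr ⟨Fin.ne_of_val_ne (by omega), by omega, by omega⟩) SimpleGraph.Walk.nil
  | (d+2), u, v, h, _ =>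
      SimpleGraph.Walk.cons (adj_nxt t u (hk_of h))
        (mkW t (d+1) (nxt t u (hk_of h)) v (nxt_hyp h) (by omega))

lemma mkW_length (t : ℕ) : ∀ (d : ℕ) (u v : Fin (2 * k + 4))
    (h : u.val / 2 + d = v.val / 2) (hd : 1 ≤ d), (mkW t d u v h hd).length = d
  | 0, _, _, _, hd => absurd hd (by omega)
  | 1, u, v, h, _ => by simp [mkW]
  | (d+2), u, v, h, _ => by
      rw [mkW, SimpleGraph.Walk.length_cons, mkW_length]

lemma mkW_support (t : ℕ) : ∀ (d : ℕ) (u v : Fin (2 * k + 4))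
    (h : u.val / 2 + d = v.val / 2) (hd : 1 ≤ d),
    ∀ x ∈ (mkW t d u v h hd).support, x = u ∨ u.val / 2 < x.val / 2
  | 0, _, _, _, hd => absurd hd (by omega)
  | 1, u, v, h, _ => by
      intro x hx
      simp [mkW] at hx
      rcases hx with rfl | rfl
      · exact Or.inl rfl
      · exact Or.inr (by omega)
  | (d+2), u, v, h, _ => by
      intro x hx
      rw [mkW, SimpleGraph.Walk.support_cons] at hx
      rcases List.mem_cons.mp hx with rfl | hx
      · exact Or.inl rfl
      · rcases mkW_support t (d+1) _ v _ _ x hx with rfl | hlt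
        · exact Or.inr (by rw [nxt_val]; omega)
        · rw [nxt_val] at hlt
          exact Or.inr (by omega)

lemma mkW_isPath (t : ℕ) : ∀ (d : ℕ) (u v : Fin (2 * k + 4))
    (h : u.val / 2 + d = v.val / 2) (hd : 1 ≤ d), (mkW t d u v h hd).IsPath
  | 0, _, _, _, hd => absurd hd (by omega)
  | 1, u, v, h, _ => by
      simp [mkW]
      exact Fin.ne_of_val_ne (by omega)
  | (d+2), u, v, h, _ => by
      rw [mkW, SimpleGraph.Walk.cons_isPath_iff]
      refine ⟨mkW_isPath t (d+1) _ v _ _, ?_⟩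
      intro hu
      rcases mkW_support t (d+1) _ v _ _ u hu with heq | hlt
      · have := congrArg Fin.val heq
        rw [nxt_val] at this
        omega
      · rw [nxt_val] at hlt
        omega

lemma mkW_edges (t : ℕ) : ∀ (d : ℕ) (u v : Fin (2 * k + 4))
    (h : u.val / 2 + d = v.val / 2) (hd : 1 ≤ d),
    ∀ e ∈ (mkW t d u v h hd).edges, ∃ a b : Fin (2 * k + 4),
      e = s(a, b) ∧ b.val / 2 = a.val / 2 + 1 ∧
      (a = u ∨ a.val % 2 = t % 2) ∧ (b = v ∨ b.val % 2 = t % 2)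
  | 0, _, _, _, hd => absurd hd (by omega)
  | 1, u, v, h, _ => by
      intro e he
      simp [mkW] at he
      exact ⟨u, v, he, by omega, Or.inl rfl, Or.inl rfl⟩
  | (d+2), u, v, h, _ => by
      intro e he
      rw [mkW, SimpleGraph.Walk.edges_cons] at he
      rcases List.mem_cons.mp he with rfl | he
      · refine ⟨u, nxt t u (hk_of h), rfl, ?_, Or.inl rfl, Or.inr ?_⟩ <;>
          rw [nxt_val] <;> omega
      · obtain ⟨a, b, rfl, hb, ha2, hb2⟩ := mkW_edges t (d+1) _ v _ _ e he
        refine ⟨a, b, rfl, hb, ?_, hb2⟩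
        rcases ha2 with rfl | ha2
        · exact Or.inr (by rw [nxt_val]; omega)
        · exact Or.inr ha2

lemma dist_eq_of {u v : Fin (2 * k + 4)} {d : ℕ}
    (h : u.val / 2 + d = v.val / 2) (hd : 1 ≤ d) : (chainK4 k).dist u v = d := by
  refine le_antisymm ?_ ?_
  · have := SimpleGraph.dist_le (mkW 0 d u v h hd)
    rwa [mkW_length] at this
  · obtain ⟨p, hp⟩ := SimpleGraph.Reachable.exists_walk_length_eq_dist
      (⟨mkW 0 d u v h hd⟩ : (chainK4 k).Reachable u v)
    have := walk_lower p
    omega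


lemma sep_symm {G : SimpleGraph V} {e : Sym2 V} {u v : V}
    (h : EdgeSeparates G e u v) : EdgeSeparates G e v u := by
  intro p hp
  have := h p.reverse ⟨hp.1.reverse, by
    rw [SimpleGraph.Walk.length_reverse, hp.2, SimpleGraph.dist_comm]⟩
  rwa [SimpleGraph.Walk.edges_reverse, List.mem_reverse] at this

lemma not_sep_lt {u v : Fin (2 * k + 4)} {d : ℕ}
    (h : u.val / 2 + d = v.val / 2) (hd : 2 ≤ d)
    (e : Sym2 (Fin (2 * k + 4))) : ¬ EdgeSeparates (chainK4 k) e u v := by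
  intro hsep
  have hd1 : 1 ≤ d := by omega
  have hsp : ∀ t, IsShortestPath (chainK4 k) (mkW t d u v h hd1) := fun t =>
    ⟨mkW_isPath t d u v h hd1, by rw [mkW_length, dist_eq_of h hd1]⟩
  have h0 := hsep (mkW 0 d u v h hd1) (hsp 0)
  have h1 := hsep (mkW 1 d u v h hd1) (hsp 1)
  obtain ⟨a, b, rfl, hb, ha0, hb0⟩ := mkW_edges 0 d u v h hd1 e h0
  obtain ⟨a', b', he, hb', ha1, hb1⟩ := mkW_edges 1 d u v h hd1 _ h1
  rcases Sym2.eq_iff.mp he with ⟨rfl, rfl⟩ | ⟨rfl, rfl⟩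
  · have hau : a = u := by
      rcases ha0 with rfl | ha0
      · rfl
      · rcases ha1 with rfl | ha1
        · rfl
        · omega
    have hbv : b = v := by
      rcases hb0 with rfl | hb0
      · rfl
      · rcases hb1 with rfl | hb1
        · rfl
        · omega
    subst hau hbv
    omega
  · omega

lemma not_sep {u v : Fin (2 * k + 4)} (hna : ¬ (chainK4 k).Adj u v)
    (e : Sym2 (Fin (2 * k + 4))) : ¬ EdgeSeparates (chainK4 k) e u v := by
  rcases eq_or_ne u v with rfl | hne
  · intro hsep
    have := hsep SimpleGraph.Walk.nil
      ⟨SimpleGraph.Walk.IsPath.nil, by simp [SimpleGraph.dist_self]⟩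
    simp at this
  · have hcond : ¬ (u.val / 2 ≤ v.val / 2 + 1 ∧ v.val / 2 ≤ u.val / 2 + 1) := by
      intro hc
      exact hna (adj_iff.mpr ⟨hne, hc.1, hc.2⟩)
    rcases le_or_gt (u.val / 2) (v.val / 2) with hle | hlt
    · exact not_sep_lt (d := v.val / 2 - u.val / 2) (by omega) (by omega) e
    · intro hsep
      exact not_sep_lt (u := v) (v := u) (d := u.val / 2 - v.val / 2)
        (by omega) (by omega) e (sep_symm hsep)

lemma diam_eq : (chainK4 k).diam = k + 1 := by
  have hub : (chainK4 k).ediam ≤ ((k + 1 : ℕ) : ℕ∞) := by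
    apply SimpleGraph.ediam_le_of_edist_le
    intro u v
    rcases eq_or_ne u v with rfl | hne
    · simp
    · rcases lt_trichotomy (u.val / 2) (v.val / 2) with hlt | heq | hgt
      · have h : u.val / 2 + (v.val / 2 - u.val / 2) = v.val / 2 := by omega
        have := SimpleGraph.Walk.edist_le (mkW 0 _ u v h (by omega))
        rw [mkW_length] at this
        refine this.trans (Nat.cast_le.mpr ?_)
        have := v.isLt
        omega
      · have : (chainK4 k).Adj u v := adj_iff.mpr ⟨hne, by omega, by omega⟩
        rw [SimpleGraph.edist_eq_one_iff_adj.mpr this]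
        exact_mod_cast (by omega : 1 ≤ k + 1)
      · have h : v.val / 2 + (u.val / 2 - v.val / 2) = u.val / 2 := by omega
        have := SimpleGraph.Walk.edist_le (mkW 0 _ v u h (by omega))
        rw [mkW_length] at this
        rw [SimpleGraph.edist_comm]
        refine this.trans (Nat.cast_le.mpr ?_)
        have := u.isLt
        omega
  have hnt : (chainK4 k).ediam ≠ ⊤ := fun ht => by
    rw [ht] at hub
    exact (ENat.coe_ne_top (k + 1)) (top_le_iff.mp hub)
  have hdist : (chainK4 k).dist ⟨0, by omega⟩ ⟨2 * k + 3, by omega⟩ = k + 1 :=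
    dist_eq_of (by simp only [Fin.val_mk]; omega) (by omega)
  apply le_antisymm
  · have := ENat.toNat_le_toNat hub (ENat.coe_ne_top (k + 1))
    rw [ENat.toNat_coe] at this
    simpa [SimpleGraph.diam] using this
  · rw [← hdist]
    exact SimpleGraph.dist_le_diam hnt

lemma aux_bot : auxGraph (chainK4 k) = ⊥ := by
  ext e₁ e₂
  simp only [SimpleGraph.bot_adj, iff_false]
  rintro ⟨hne, u, v, huv, h1, h2⟩
  by_cases hadj : (chainK4 k).Adj u v
  · have hp : IsShortestPath (chainK4 k) (SimpleGraph.Walk.cons hadj SimpleGraph.Walk.nil) := by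
      constructor
      · rw [SimpleGraph.Walk.cons_isPath_iff]
        exact ⟨SimpleGraph.Walk.IsPath.nil, by simp [hadj.ne]⟩
      · simp [SimpleGraph.dist_eq_one_iff_adj.mpr hadj]
    have he1 := h1 _ hp
    have he2 := h2 _ hp
    simp only [SimpleGraph.Walk.edges_cons, SimpleGraph.Walk.edges_nil,
      List.mem_singleton] at he1 he2
    exact hne (Subtype.ext (he1.trans he2.symm))
  · exact not_sep hadj e₁.1 h1

lemma edge01 : s((⟨0, by omega⟩ : Fin (2 * k + 4)), ⟨1, by omega⟩) ∈ (chainK4 k).edgeSet := by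
  rw [SimpleGraph.mem_edgeSet]
  exact adj_iff.mpr ⟨Fin.ne_of_val_ne (by simp), by simp only [Fin.val_mk]; omega,
    by simp only [Fin.val_mk]; omega⟩

lemma clique_num : (auxGraph (chainK4 k)).cliqueNum = 1 := by
  have hbot := aux_bot (k := k)
  have hset : {n | ∃ s, (auxGraph (chainK4 k)).IsNClique n s} = Set.Iic 1 := by
    ext n
    simp only [Set.mem_setOf_eq, Set.mem_Iic]
    constructor
    · rintro ⟨s, hs⟩
      rw [← hs.2]
      refine Finset.card_le_one.mpr fun a ha b hb => ?_
      by_contra hab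
      have := hs.1 (Finset.mem_coe.mpr ha) (Finset.mem_coe.mpr hb) hab
      rw [hbot] at this
      simp at this
    · intro hn
      interval_cases n
      · exact ⟨∅, SimpleGraph.isNClique_empty.mpr rfl⟩
      · refine ⟨{⟨_, edge01 (k := k)⟩}, ?_, Finset.card_singleton _⟩
        simp [SimpleGraph.IsClique, Set.pairwise_singleton]
  rw [SimpleGraph.cliqueNum, hset, csSup_Iic]

end ChainHelp


/-- For the chain of `k+1` copies of `K₄`: the diameter is `k+1`, no pair of
(non-adjacent) vertices is separated by any edge, the auxiliary graph has no
edges so `ω(H(G)) = 1`, and hence `diam(G) − ω(H(G)) = k`. -/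
theorem stmt8 (k : ℕ) :
    (chainK4 k).diam = k + 1 ∧
    (∀ u v : Fin (2 * k + 4), ¬ (chainK4 k).Adj u v →
      ∀ e : Sym2 (Fin (2 * k + 4)), ¬ EdgeSeparates (chainK4 k) e u v) ∧
    auxGraph (chainK4 k) = ⊥ ∧
    (auxGraph (chainK4 k)).cliqueNum = 1 ∧
    (chainK4 k).diam - (auxGraph (chainK4 k)).cliqueNum = k := by
  refine ⟨ChainHelp.diam_eq, fun u v hna e => ChainHelp.not_sep hna e, ChainHelp.aux_bot,
    ChainHelp.clique_num, ?_⟩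
  rw [ChainHelp.diam_eq, ChainHelp.clique_num]
  omega
end

section
/- Let G be a simple connected graph with distinct vertices u, v, and let D_{uv} be the union of all shortest (u,v)-paths directed from u to v. A vertex w (w ≠ u, v) separates u and v in G if and only if there is no directed (u,v)-path in D_{uv} − w (D_{uv} with w and its incident edges removed). -/
open SimpleGraph

variable {V : Type*} {C : Type*}

private lemma dartDist {V : Type*} {G : SimpleGraph V} (hG : G.Connected) :
    ∀ {u v : V} (p : G.Walk u v), p.length = G.dist u v →
      ∀ d ∈ p.darts,
        G.dist u d.toProd.1 + G.dist d.toProd.1 v = G.dist u v ∧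
        G.dist u d.toProd.2 + G.dist d.toProd.2 v = G.dist u v ∧
        G.dist u d.toProd.2 = G.dist u d.toProd.1 + 1 := by
  intro u v p
  induction p with
  | nil => intro _ d hd; simp at hd
  | @cons u x v h q ih =>
    intro hlen d hd
    rw [SimpleGraph.Walk.length_cons] at hlen
    have hux : G.dist u x ≤ 1 := by
      have := SimpleGraph.dist_le (SimpleGraph.Walk.cons h SimpleGraph.Walk.nil)
      simpa using this
    have hxv : G.dist x v ≤ q.length := SimpleGraph.dist_le q
    have ht : G.dist u v ≤ G.dist u x + G.dist x v := hG.dist_triangle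
    have hxv' : G.dist x v = q.length := by omega
    have huu : G.dist u u = 0 := SimpleGraph.dist_self
    rw [SimpleGraph.Walk.darts_cons, List.mem_cons] at hd
    rcases hd with rfl | hd
    · refine ⟨?_, ?_, ?_⟩
      · show G.dist u u + G.dist u v = G.dist u v; omega
      · show G.dist u x + G.dist x v = G.dist u v; omega
      · show G.dist u x = G.dist u u + 1; omega
    · obtain ⟨A1, A2, A3⟩ := ih hxv'.symm d hd
      have t1 : G.dist u v ≤ G.dist u d.toProd.1 + G.dist d.toProd.1 v := hG.dist_triangle
      have t2 : G.dist u v ≤ G.dist u d.toProd.2 + G.dist d.toProd.2 v := hG.dist_triangle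
      have t3 : G.dist u d.toProd.1 ≤ G.dist u x + G.dist x d.toProd.1 := hG.dist_triangle
      have t4 : G.dist u d.toProd.2 ≤ G.dist u x + G.dist x d.toProd.2 := hG.dist_triangle
      omega

private lemma chainOfPath {V : Type*} {G : SimpleGraph V} {u v w : V}
    (p : G.Walk u v) (hp : IsShortestPath G p) :
    ∀ {a : V} (q : G.Walk a v), (∀ d ∈ q.darts, d ∈ p.darts) →
      (∀ x ∈ q.support, x ≠ w) →
      Relation.ReflTransGen
        (fun a b =>
          (∃ p : G.Walk u v, IsShortestPath G p ∧
            ∃ d ∈ p.darts, d.toProd = (a, b)) ∧ a ≠ w ∧ b ≠ w) a v := by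
  intro a q
  induction q with
  | nil => intro _ _; exact Relation.ReflTransGen.refl
  | @cons a b v h q ih =>
    intro hsub hsup
    have hd1 : (⟨(a, b), h⟩ : G.Dart) ∈ p.darts := by
      refine hsub _ ?_
      rw [SimpleGraph.Walk.darts_cons]
      exact List.mem_cons_self
    have haw : a ≠ w := by
      refine hsup a ?_
      rw [SimpleGraph.Walk.support_cons]
      exact List.mem_cons_self
    have hbw : b ≠ w := by
      refine hsup b ?_
      rw [SimpleGraph.Walk.support_cons]
      exact List.mem_cons_of_mem _ q.start_mem_support
    refine Relation.ReflTransGen.head ⟨⟨p, hp, ⟨(a, b), h⟩, hd1, rfl⟩, haw, hbw⟩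
      (ih p hp (fun d hd => hsub d ?_) (fun x hx => hsup x ?_))
    · rw [SimpleGraph.Walk.darts_cons]; exact List.mem_cons_of_mem _ hd
    · rw [SimpleGraph.Walk.support_cons]; exact List.mem_cons_of_mem _ hx

/-- A vertex `w ∉ {u,v}` separates `u` and `v` iff there is no directed
`(u,v)`-path in `D_{uv} − w`, where `D_{uv}` is the union of all shortest
`(u,v)`-paths directed from `u` to `v`. -/
theorem stmt14 {V : Type*} (G : SimpleGraph V) (hG : G.Connected)
    {u v : V} (huv : u ≠ v) (w : V) (hwu : w ≠ u) (hwv : w ≠ v) :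
    VertexSeparates G w u v ↔
      ¬ Relation.ReflTransGen
          (fun a b =>
            (∃ p : G.Walk u v, IsShortestPath G p ∧
              ∃ d ∈ p.darts, d.toProd = (a, b)) ∧
            a ≠ w ∧ b ≠ w) u v := by
  classical
  constructor
  · rintro ⟨-, -, hsep⟩ hrtg
    have key : ∀ b, Relation.ReflTransGen
        (fun a b =>
          (∃ p : G.Walk u v, IsShortestPath G p ∧
            ∃ d ∈ p.darts, d.toProd = (a, b)) ∧ a ≠ w ∧ b ≠ w) u b →
        ∃ q : G.Walk u b, q.length = G.dist u b ∧
          G.dist u b + G.dist b v = G.dist u v ∧ w ∉ q.support := by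
      intro b hb
      induction hb with
      | refl =>
        exact ⟨SimpleGraph.Walk.nil, by simp [SimpleGraph.dist_self],
          by simp [SimpleGraph.dist_self], by simp [hwu]⟩
      | @tail b c hub hbc ih =>
        obtain ⟨q, hql, hqd, hqw⟩ := ih
        obtain ⟨⟨p, hp, d, hd, hdp⟩, hbw, hcw⟩ := hbc
        obtain ⟨-, h2, h3⟩ := dartDist hG p hp.2 d hd
        rw [hdp] at h2 h3
        have h2' : G.dist u c + G.dist c v = G.dist u v := h2
        have h3' : G.dist u c = G.dist u b + 1 := h3
        have hadj : G.Adj b c := by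
          have := d.adj
          rwa [show d.toProd = (b, c) from hdp] at this
        refine ⟨q.concat hadj, ?_, ?_, ?_⟩
        · rw [SimpleGraph.Walk.length_concat]; omega
        · omega
        · rw [SimpleGraph.Walk.support_concat]
          simp only [List.concat_eq_append, List.mem_append, List.mem_singleton]
          rintro (h | rfl)
          · exact hqw h
          · exact hcw rfl
    obtain ⟨q, hql, -, hqw⟩ := key v hrtg
    have hb1 : q.bypass.IsPath := q.bypass_isPath
    have hb2 : q.bypass.length = G.dist u v := le_antisymm
      (hql ▸ q.length_bypass_le) (SimpleGraph.dist_le _)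
    exact hqw (q.support_bypass_subset (hsep q.bypass ⟨hb1, hb2⟩))
  · intro hrtg
    refine ⟨hwu, hwv, fun p hp => ?_⟩
    by_contra hw
    exact hrtg (chainOfPath p hp p (fun d hd => hd) (fun x hx h => hw (h ▸ hx)))
end
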